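/- Fix T ≥ 1, X ∈ ℝ^{n×T} with C_X = (1/T)XXᵀ positive definite, and W ∈ ℝ^{m×n} of full row rank m (with m ≤ n). Let M₁, M₂ : [0,∞) → ℝ^{m×m} be two differentiable solutions of the gradient-flow lateral synaptic dynamics Ṁ(t) = −2M(t) + 2 M(t)⁻¹ W C_X Wᵀ M(t)⁻¹ such that M₁(t) and M₂(t) are symmetric positive definite for every t ≥ 0. Then for all t ≥ 0, ‖M₁(t) − M₂(t)‖_F ≤ e^{−2t} ‖M₁(0) − M₂(0)‖_F. -/

import Mathlib

open Matrix

lemma psd_trace_nonneg {k : ℕ} {A : Matrix (Fin k) (Fin k) ℝ} (h : A.PosSemidef) :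
    0 ≤ A.trace := by
  rw [Matrix.trace]
  exact Finset.sum_nonneg fun i _ => by simpa [Matrix.diag] using h.diag_nonneg (i := i)

lemma psd_trace_mul_nonneg {k : ℕ} {A B : Matrix (Fin k) (Fin k) ℝ}
    (hA : A.PosSemidef) (hB : B.PosSemidef) : 0 ≤ (A * B).trace := by
  obtain ⟨D, rfl⟩ : ∃ D : Matrix (Fin k) (Fin k) ℝ, B = Dᴴ * D := by
    open scoped MatrixOrder in exact CStarAlgebra.nonneg_iff_eq_star_mul_self.mp hB.nonneg
  have : (A * (Dᴴ * D)).trace = (D * A * Dᴴ).trace := by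
    rw [← Matrix.mul_assoc, Matrix.trace_mul_comm, ← Matrix.mul_assoc]
  rw [this]
  exact psd_trace_nonneg (hA.mul_mul_conjTranspose_same D)

lemma key_trace_le {k : ℕ} {A M₁ M₂ : Matrix (Fin k) (Fin k) ℝ}
    (hA : A.PosSemidef) (h1 : M₁.PosDef) (h2 : M₂.PosDef) :
    ((M₁ - M₂) * (M₁⁻¹ * A * M₁⁻¹ - M₂⁻¹ * A * M₂⁻¹)).trace ≤ 0 := by
  have hd1 : IsUnit M₁.det := h1.det_pos.ne'.isUnit
  have hd2 : IsUnit M₂.det := h2.det_pos.ne'.isUnit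
  have eL : (M₁ - M₂) * (M₁⁻¹ * A * M₁⁻¹ - M₂⁻¹ * A * M₂⁻¹)
      = A * M₁⁻¹ + A * M₂⁻¹ - M₁ * M₂⁻¹ * A * M₂⁻¹ - M₂ * M₁⁻¹ * A * M₁⁻¹ := by
    simp only [Matrix.sub_mul, Matrix.mul_sub, ← Matrix.mul_assoc,
      Matrix.mul_nonsing_inv _ hd1, Matrix.mul_nonsing_inv _ hd2, Matrix.one_mul]
    abel
  have eR1 : (M₂⁻¹ - M₁⁻¹) * M₁ * (M₂⁻¹ - M₁⁻¹) * A
      = M₂⁻¹ * M₁ * M₂⁻¹ * A - M₂⁻¹ * A - M₂⁻¹ * A + M₁⁻¹ * A := by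
    simp only [Matrix.sub_mul, Matrix.mul_sub, ← Matrix.mul_assoc,
      Matrix.nonsing_inv_mul _ hd1, Matrix.mul_nonsing_inv _ hd1,
      Matrix.mul_nonsing_inv_cancel_right _ _ hd1, Matrix.one_mul]
    abel
  have eR2 : (M₁⁻¹ - M₂⁻¹) * M₂ * (M₁⁻¹ - M₂⁻¹) * A
      = M₁⁻¹ * M₂ * M₁⁻¹ * A - M₁⁻¹ * A - M₁⁻¹ * A + M₂⁻¹ * A := by
    simp only [Matrix.sub_mul, Matrix.mul_sub, ← Matrix.mul_assoc,
      Matrix.nonsing_inv_mul _ hd2, Matrix.mul_nonsing_inv _ hd2,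
      Matrix.mul_nonsing_inv_cancel_right _ _ hd2, Matrix.one_mul]
    abel
  have key_eq : ((M₁ - M₂) * (M₁⁻¹ * A * M₁⁻¹ - M₂⁻¹ * A * M₂⁻¹)).trace
      = -(((M₂⁻¹ - M₁⁻¹) * M₁ * (M₂⁻¹ - M₁⁻¹) * A).trace
        + ((M₁⁻¹ - M₂⁻¹) * M₂ * (M₁⁻¹ - M₂⁻¹) * A).trace) := by
    rw [eL, eR1, eR2]
    simp only [trace_add, trace_sub]
    rw [trace_mul_comm A M₁⁻¹, trace_mul_comm A M₂⁻¹,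
      show (M₁ * M₂⁻¹ * A * M₂⁻¹).trace = (M₂⁻¹ * M₁ * M₂⁻¹ * A).trace by
        rw [Matrix.trace_mul_comm (M₁ * M₂⁻¹ * A) M₂⁻¹, ← Matrix.mul_assoc, ← Matrix.mul_assoc],
      show (M₂ * M₁⁻¹ * A * M₁⁻¹).trace = (M₁⁻¹ * M₂ * M₁⁻¹ * A).trace by
        rw [Matrix.trace_mul_comm (M₂ * M₁⁻¹ * A) M₁⁻¹, ← Matrix.mul_assoc, ← Matrix.mul_assoc]]
    ring
  rw [key_eq]
  have hS1 : ((M₂⁻¹ - M₁⁻¹) * M₁ * (M₂⁻¹ - M₁⁻¹)).PosSemidef := by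
    have := h1.posSemidef.conjTranspose_mul_mul_same (M₂⁻¹ - M₁⁻¹)
    rwa [conjTranspose_sub, h1.isHermitian.inv.eq, h2.isHermitian.inv.eq] at this
  have hS2 : ((M₁⁻¹ - M₂⁻¹) * M₂ * (M₁⁻¹ - M₂⁻¹)).PosSemidef := by
    have := h2.posSemidef.conjTranspose_mul_mul_same (M₁⁻¹ - M₂⁻¹)
    rwa [conjTranspose_sub, h1.isHermitian.inv.eq, h2.isHermitian.inv.eq] at this
  have t1 := psd_trace_mul_nonneg hS1 hA
  have t2 := psd_trace_mul_nonneg hS2 hA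
  simp only [Matrix.mul_assoc] at t1 t2 ⊢
  linarith

lemma sum_entry_mul_eq_trace {k : ℕ} (D G : Matrix (Fin k) (Fin k) ℝ) :
    ∑ p : Fin k × Fin k, D p.1 p.2 * G p.1 p.2 = (Dᵀ * G).trace := by
  simp only [Matrix.trace, Matrix.diag, Matrix.mul_apply, Matrix.transpose_apply,
    Fintype.sum_prod_type]
  rw [Finset.sum_comm]

/-- Frobenius norm `‖A‖_F = √tr(AᵀA)`. -/
noncomputable def frobNorm {k l : ℕ} (A : Matrix (Fin k) (Fin l) ℝ) : ℝ :=
  Real.sqrt (Aᵀ * A).trace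

/-- the gradient-flow lateral synaptic dynamics
`Ṁ = −2M + 2M⁻¹ W C_X Wᵀ M⁻¹` is strongly contracting with rate 2 on positive
definite solutions, with respect to the Frobenius norm. -/
theorem lateral_dynamics_contracting
    {n T m : ℕ} (hT : 1 ≤ T) (hmn : m ≤ n)
    (X : Matrix (Fin n) (Fin T) ℝ)
    (C : Matrix (Fin n) (Fin n) ℝ) (hC : C = (T : ℝ)⁻¹ • (X * Xᵀ)) (hCpd : C.PosDef)
    (W : Matrix (Fin m) (Fin n) ℝ) (hW : W.rank = m)
    (M₁ M₂ : ℝ → Matrix (Fin m) (Fin m) ℝ)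
    (hM₁pd : ∀ t : ℝ, 0 ≤ t → (M₁ t).PosDef)
    (hM₂pd : ∀ t : ℝ, 0 ≤ t → (M₂ t).PosDef)
    (hM₁ : ∀ t : ℝ, 0 ≤ t → ∀ i j, HasDerivAt (fun s => M₁ s i j)
        ((-((2 : ℝ) • M₁ t) + (2 : ℝ) • ((M₁ t)⁻¹ * (W * C * Wᵀ) * (M₁ t)⁻¹)) i j) t)
    (hM₂ : ∀ t : ℝ, 0 ≤ t → ∀ i j, HasDerivAt (fun s => M₂ s i j)
        ((-((2 : ℝ) • M₂ t) + (2 : ℝ) • ((M₂ t)⁻¹ * (W * C * Wᵀ) * (M₂ t)⁻¹)) i j) t) :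
    ∀ t : ℝ, 0 ≤ t →
      frobNorm (M₁ t - M₂ t) ≤ Real.exp (-2 * t) * frobNorm (M₁ 0 - M₂ 0) := by
  have hApsd : (W * C * Wᵀ).PosSemidef := by
    have := hCpd.posSemidef.mul_mul_conjTranspose_same W
    rwa [conjTranspose_eq_transpose_of_trivial] at this
  set A : Matrix (Fin m) (Fin m) ℝ := W * C * Wᵀ with hAdef
  -- the squared Frobenius norm of the difference
  set f : ℝ → ℝ := fun s => ∑ p : Fin m × Fin m, (M₁ s p.1 p.2 - M₂ s p.1 p.2) ^ 2 with hfdef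
  -- derivative value of f at time t
  set f' : ℝ → ℝ := fun t => ∑ p : Fin m × Fin m,
      ((2 : ℕ) * (M₁ t p.1 p.2 - M₂ t p.1 p.2) ^ 1 *
        ((-((2 : ℝ) • M₁ t) + (2 : ℝ) • ((M₁ t)⁻¹ * A * (M₁ t)⁻¹)) p.1 p.2
          - (-((2 : ℝ) • M₂ t) + (2 : ℝ) • ((M₂ t)⁻¹ * A * (M₂ t)⁻¹)) p.1 p.2)) with hf'def
  have hfderiv : ∀ t : ℝ, 0 ≤ t → HasDerivAt f (f' t) t := by
    intro t ht
    exact HasDerivAt.fun_sum fun (p : Fin m × Fin m) _ =>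
      (((hM₁ t ht p.1 p.2).sub (hM₂ t ht p.1 p.2)).pow 2)
  have hfnonneg : ∀ t : ℝ, 0 ≤ f t := fun t =>
    Finset.sum_nonneg fun p _ => sq_nonneg _
  -- the key derivative bound
  have hbound : ∀ t : ℝ, 0 ≤ t → f' t ≤ -4 * f t := by
    intro t ht
    have hsym : (M₁ t - M₂ t)ᵀ = M₁ t - M₂ t := by
      have h1 := (hM₁pd t ht).isHermitian.eq
      have h2 := (hM₂pd t ht).isHermitian.eq
      rw [conjTranspose_eq_transpose_of_trivial] at h1 h2
      rw [transpose_sub, h1, h2]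
    have htr : ∑ p : Fin m × Fin m, (M₁ t p.1 p.2 - M₂ t p.1 p.2) *
          ((M₁ t)⁻¹ * A * (M₁ t)⁻¹ - (M₂ t)⁻¹ * A * (M₂ t)⁻¹) p.1 p.2
        = ((M₁ t - M₂ t) * ((M₁ t)⁻¹ * A * (M₁ t)⁻¹ - (M₂ t)⁻¹ * A * (M₂ t)⁻¹)).trace := by
      rw [← hsym]
      rw [← sum_entry_mul_eq_trace]
      simp [Matrix.sub_apply]
    have hkey := key_trace_le hApsd (hM₁pd t ht) (hM₂pd t ht)
    rw [← htr] at hkey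
    have expand : f' t = -4 * f t + 4 * ∑ p : Fin m × Fin m, (M₁ t p.1 p.2 - M₂ t p.1 p.2) *
          ((M₁ t)⁻¹ * A * (M₁ t)⁻¹ - (M₂ t)⁻¹ * A * (M₂ t)⁻¹) p.1 p.2 := by
      rw [hf'def, hfdef]
      simp only [Finset.mul_sum, ← Finset.sum_add_distrib]
      apply Finset.sum_congr rfl
      intro p _
      simp only [Matrix.add_apply, Matrix.neg_apply, Matrix.smul_apply, Matrix.sub_apply,
        smul_eq_mul, pow_one]
      push_cast
      ring
    rw [expand]
    linarith
  -- the auxiliary function g = e^{4t} f t is antitone on [0, ∞)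
  set g : ℝ → ℝ := fun s => Real.exp (4 * s) * f s with hgdef
  have hgderiv : ∀ t : ℝ, 0 ≤ t →
      HasDerivAt g (Real.exp (4 * t) * 4 * f t + Real.exp (4 * t) * f' t) t := by
    intro t ht
    have h := (((hasDerivAt_id t).const_mul (4 : ℝ)).exp).mul (hfderiv t ht)
    simp only [id, mul_one] at h
    exact h
  have hanti : AntitoneOn g (Set.Ici (0 : ℝ)) := by
    apply antitoneOn_of_deriv_nonpos (convex_Ici 0)
    · exact fun t ht => (hgderiv t ht).continuousAt.continuousWithinAt
    · rw [interior_Ici]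
      exact fun t ht => (hgderiv t (le_of_lt ht)).differentiableAt.differentiableWithinAt
    · rw [interior_Ici]
      intro t ht
      rw [(hgderiv t ht.le).deriv]
      have hb := hbound t ht.le
      have he : (0 : ℝ) < Real.exp (4 * t) := Real.exp_pos _
      nlinarith
  intro t ht
  have hg0 : g t ≤ g 0 := hanti Set.self_mem_Ici ht ht
  rw [hgdef] at hg0
  simp only [mul_zero, Real.exp_zero, one_mul] at hg0
  -- translate to the claim
  have hfrob : ∀ s : ℝ, frobNorm (M₁ s - M₂ s) = Real.sqrt (f s) := by
    intro s
    rw [frobNorm, hfdef]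
    congr 1
    rw [← sum_entry_mul_eq_trace]
    apply Finset.sum_congr rfl
    intro p _
    simp [Matrix.sub_apply, sq]
  rw [hfrob, hfrob]
  have hft : f t ≤ Real.exp (-4 * t) * f 0 := by
    have he : (0 : ℝ) < Real.exp (4 * t) := Real.exp_pos _
    rw [show (-4 : ℝ) * t = -(4 * t) by ring, Real.exp_neg, inv_mul_eq_div]
    exact (le_div_iff₀ he).mpr (by linarith [hg0])
  calc Real.sqrt (f t) ≤ Real.sqrt (Real.exp (-4 * t) * f 0) := Real.sqrt_le_sqrt hft
    _ = Real.exp (-2 * t) * Real.sqrt (f 0) := by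
        rw [Real.sqrt_mul (Real.exp_nonneg _)]
        congr 1
        rw [show (-4 : ℝ) * t = (-2 * t) + (-2 * t) by ring, Real.exp_add]
        exact Real.sqrt_mul_self (Real.exp_nonneg (-2 * t))
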